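/- For every c₀ ≥ 1 there exists a constant C > 0 (depending only on c₀) with the following property. Let τ ∈ ℝ, ξ > 0, q ∈ ℤ, K₁, K₂ ≥ 1, M₁, M₂ ≥ 1, and let I₁, I₂ be intervals. Let B^{2,1} be the set of (ξ₁, q₁) ∈ ℝ×ℤ such that ξ₁ ∈ I₁, ξ − ξ₁ ∈ I₂, M₁ ≤ ξ₁ ≤ 2M₁, M₂ ≤ ξ − ξ₁ ≤ 2M₂, ⟨τ − ξ³ + q²/ξ + 3 ξ ξ₁ (ξ − ξ₁) + (ξ q₁ − ξ₁ q)²/(ξ ξ₁ (ξ − ξ₁))⟩ ≤ c₀ (K₁∨K₂), and 1 ≤ |q₁/ξ₁ − (q − q₁)/(ξ − ξ₁)| < (K₁∨K₂)^{1/2} / (M₁∧M₂)^{1/2}. Then μ(B^{2,1}) ≤ C · (K₁∨K₂) · (M₁∧M₂)^{1/2} / (M₁∨M₂)^{1/2}. -/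

import Mathlib

open MeasureTheory

/-- Japanese bracket `⟨x⟩ = (1+x²)^{1/2}`. -/
noncomputable def jb (x : ℝ) : ℝ := Real.sqrt (1 + x ^ 2)

lemma abs_le_jb (y : ℝ) : |y| ≤ jb y := by
  unfold jb
  rw [← Real.sqrt_sq_eq_abs]
  exact Real.sqrt_le_sqrt (by nlinarith)

lemma sqrt_add_le' (x y : ℝ) (hx : 0 ≤ x) (hy : 0 ≤ y) :
    Real.sqrt (x + y) ≤ Real.sqrt x + Real.sqrt y := by
  nlinarith [Real.sq_sqrt hx, Real.sq_sqrt hy, Real.sqrt_nonneg x, Real.sqrt_nonneg y,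
    Real.sq_sqrt (add_nonneg hx hy), Real.sqrt_nonneg (x + y)]

lemma sqrt_sub_sqrt_le (u w : ℝ) (h : u ≤ w) (hu' : 0 ≤ u) :
    Real.sqrt w - Real.sqrt u ≤ Real.sqrt (w - u) := by
  have hw : 0 ≤ w - u := by linarith
  have := sqrt_add_le' u (w - u) hu' hw
  rw [show u + (w - u) = w by ring] at this
  linarith

lemma vol_annulus (t d₁ d₂ : ℝ) (h : d₁ ≤ d₂) :
    volume {x : ℝ | d₁ ≤ (x - t) ^ 2 ∧ (x - t) ^ 2 ≤ d₂} ≤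
      ENNReal.ofReal (2 * Real.sqrt (d₂ - d₁)) := by
  set u := max d₁ 0 with hu
  have hu0 : 0 ≤ u := le_max_right _ _
  have hsub : {x : ℝ | d₁ ≤ (x - t) ^ 2 ∧ (x - t) ^ 2 ≤ d₂} ⊆
      Set.Icc (t - Real.sqrt d₂) (t - Real.sqrt u) ∪
      Set.Icc (t + Real.sqrt u) (t + Real.sqrt d₂) := by
    intro x ⟨h1, h2⟩
    have habs : |x - t| ≤ Real.sqrt d₂ := by
      rw [← Real.sqrt_sq_eq_abs]; exact Real.sqrt_le_sqrt h2
    have habs2 : Real.sqrt u ≤ |x - t| := by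
      rw [← Real.sqrt_sq_eq_abs]
      exact Real.sqrt_le_sqrt (max_le h1 (sq_nonneg _))
    rcases le_total (x - t) 0 with hxt | hxt
    · rw [abs_of_nonpos hxt] at habs habs2
      exact Or.inl (Set.mem_Icc.mpr ⟨by linarith, by linarith⟩)
    · rw [abs_of_nonneg hxt] at habs habs2
      exact Or.inr (Set.mem_Icc.mpr ⟨by linarith, by linarith⟩)
  have key : Real.sqrt d₂ - Real.sqrt u ≤ Real.sqrt (d₂ - d₁) := by
    rcases le_or_gt d₂ 0 with hd | hd
    · have h0 : Real.sqrt d₂ = 0 := Real.sqrt_eq_zero'.mpr hd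
      rw [h0]
      have := Real.sqrt_nonneg u
      have := Real.sqrt_nonneg (d₂ - d₁)
      linarith
    · have h1 : u ≤ d₂ := max_le h hd.le
      calc Real.sqrt d₂ - Real.sqrt u ≤ Real.sqrt (d₂ - u) := sqrt_sub_sqrt_le u d₂ h1 hu0
        _ ≤ Real.sqrt (d₂ - d₁) := Real.sqrt_le_sqrt (by
            have := le_max_left d₁ (0:ℝ); rw [hu]; linarith)
  calc volume {x : ℝ | d₁ ≤ (x - t) ^ 2 ∧ (x - t) ^ 2 ≤ d₂}
      ≤ volume (Set.Icc (t - Real.sqrt d₂) (t - Real.sqrt u) ∪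
          Set.Icc (t + Real.sqrt u) (t + Real.sqrt d₂)) := measure_mono hsub
    _ ≤ volume (Set.Icc (t - Real.sqrt d₂) (t - Real.sqrt u)) +
        volume (Set.Icc (t + Real.sqrt u) (t + Real.sqrt d₂)) := measure_union_le _ _
    _ ≤ ENNReal.ofReal (2 * Real.sqrt (d₂ - d₁)) := by
        rw [Real.volume_Icc, Real.volume_Icc]
        rw [show (2 : ℝ) * Real.sqrt (d₂ - d₁) = Real.sqrt (d₂ - d₁) + Real.sqrt (d₂ - d₁) by ring]
        rw [ENNReal.ofReal_add (Real.sqrt_nonneg _) (Real.sqrt_nonneg _)]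
        gcongr <;> linarith

lemma volS_aux (ξ A B : ℝ) (hξ : 0 < ξ) (hB0 : 0 < B) :
    volume {x : ℝ | |A + 3 * ξ * x * (ξ - x)| ≤ B} ≤
      ENNReal.ofReal (2 * Real.sqrt (2 * B / (3 * ξ))) := by
  have h3ξ : (0:ℝ) < 3 * ξ := by linarith
  have hsub2 : {x : ℝ | |A + 3 * ξ * x * (ξ - x)| ≤ B} ⊆
      {x : ℝ | ((A + 3 * ξ^3/4) - B) / (3 * ξ) ≤ (x - ξ/2) ^ 2 ∧
        (x - ξ/2) ^ 2 ≤ ((A + 3 * ξ^3/4) + B) / (3 * ξ)} := by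
    intro x hx
    have hx5 : |A + 3 * ξ * x * (ξ - x)| ≤ B := hx
    rw [abs_le] at hx5
    constructor
    · rw [div_le_iff₀ h3ξ]; nlinarith [hx5.2]
    · rw [le_div_iff₀ h3ξ]; nlinarith [hx5.1]
  refine le_trans (measure_mono hsub2)
    (le_trans (vol_annulus (ξ/2) _ _ ?_) (le_of_eq ?_))
  · rw [div_le_div_iff₀ h3ξ h3ξ]
    nlinarith [hB0]
  · rw [show ((A + 3 * ξ^3/4) + B) / (3 * ξ) - ((A + 3 * ξ^3/4) - B) / (3 * ξ)
        = 2 * B / (3 * ξ) from by ring]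

instance : SFinite (Measure.count : Measure ℤ) := by
  unfold Measure.count
  infer_instance

lemma count_Ioo_le (a L : ℝ) (hL : 0 ≤ L) :
    Measure.count {n : ℤ | (n : ℝ) ∈ Set.Ioo a (a + L)} ≤ ENNReal.ofReal (L + 1) := by
  have hsub : {n : ℤ | (n : ℝ) ∈ Set.Ioo a (a + L)} ⊆ ↑(Finset.Icc ⌈a⌉ ⌊a + L⌋) := by
    intro n hn
    simp only [Set.mem_setOf_eq, Set.mem_Ioo] at hn
    simp only [Finset.coe_Icc, Set.mem_Icc]
    exact ⟨Int.ceil_le.mpr hn.1.le, Int.le_floor.mpr hn.2.le⟩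
  calc Measure.count {n : ℤ | (n : ℝ) ∈ Set.Ioo a (a + L)}
      ≤ Measure.count ↑(Finset.Icc ⌈a⌉ ⌊a + L⌋) := measure_mono hsub
    _ = ((Finset.Icc ⌈a⌉ ⌊a + L⌋).card : ENNReal) := Measure.count_apply_finset _
    _ ≤ ENNReal.ofReal (L + 1) := by
        rw [Int.card_Icc, ← ENNReal.ofReal_natCast]
        apply ENNReal.ofReal_le_ofReal
        have h2 : (⌊a + L⌋ : ℝ) ≤ a + L := Int.floor_le _
        have h3 : a ≤ (⌈a⌉ : ℝ) := Int.le_ceil _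
        rcases le_or_gt (⌊a + L⌋ + 1 - ⌈a⌉) 0 with hcase | hcase
        · rw [Int.toNat_of_nonpos hcase]; push_cast; linarith
        · have hcast : ((⌊a + L⌋ + 1 - ⌈a⌉).toNat : ℤ) = ⌊a + L⌋ + 1 - ⌈a⌉ :=
            Int.toNat_of_nonneg hcase.le
          have hcast' : ((⌊a + L⌋ + 1 - ⌈a⌉).toNat : ℝ) = (⌊a + L⌋ : ℝ) + 1 - ⌈a⌉ := by
            exact_mod_cast congrArg (Int.cast : ℤ → ℝ) hcast
          rw [hcast']; linarith

lemma final_aux (c₀ K m Mx ξ B L : ℝ) (hc₀ : 1 ≤ c₀) (hK1 : 1 ≤ K) (hm1 : 1 ≤ m)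
    (hMx1 : 1 ≤ Mx) (hξ : 0 < ξ) (hMxξ : Mx ≤ ξ) (hB : B = (c₀ + 4) * K)
    (hL : L = 8 * Real.sqrt K * Real.sqrt m) :
    (L + 1) * (2 * Real.sqrt (2 * B / (3 * ξ))) ≤
      18 * Real.sqrt (c₀ + 4) * K * Real.sqrt m / Real.sqrt Mx := by
  have hK0 : (0:ℝ) < K := by linarith
  have hm0 : (0:ℝ) < m := by linarith
  have hMx0 : (0:ℝ) < Mx := by linarith
  have hB0 : (0:ℝ) < B := by rw [hB]; nlinarith
  have hsK : 0 < Real.sqrt K := Real.sqrt_pos.mpr hK0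
  have hsm : 0 < Real.sqrt m := Real.sqrt_pos.mpr hm0
  have hsMx : 0 < Real.sqrt Mx := Real.sqrt_pos.mpr hMx0
  have hsK1 : 1 ≤ Real.sqrt K := by
    rw [show (1:ℝ) = Real.sqrt 1 by simp]; exact Real.sqrt_le_sqrt hK1
  have hsm1 : 1 ≤ Real.sqrt m := by
    rw [show (1:ℝ) = Real.sqrt 1 by simp]; exact Real.sqrt_le_sqrt hm1
  have h12 : (1:ℝ) ≤ Real.sqrt K * Real.sqrt m := by nlinarith
  have e1 : L + 1 ≤ 9 * Real.sqrt K * Real.sqrt m := by rw [hL]; nlinarith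
  have e2 : Real.sqrt (2 * B / (3 * ξ)) ≤ Real.sqrt (c₀ + 4) * Real.sqrt K / Real.sqrt Mx := by
    have h1 : 2 * B / (3 * ξ) ≤ B / Mx := by
      rw [div_le_div_iff₀ (by linarith : (0:ℝ) < 3 * ξ) hMx0]
      nlinarith [mul_le_mul_of_nonneg_left hMxξ (by linarith : (0:ℝ) ≤ 2 * B),
        mul_nonneg hB0.le hξ.le]
    calc Real.sqrt (2 * B / (3 * ξ)) ≤ Real.sqrt (B / Mx) := Real.sqrt_le_sqrt h1
      _ = Real.sqrt B / Real.sqrt Mx := Real.sqrt_div hB0.le _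
      _ = Real.sqrt (c₀ + 4) * Real.sqrt K / Real.sqrt Mx := by
          rw [hB, Real.sqrt_mul (by linarith)]
  have hL0 : (0:ℝ) ≤ L := by rw [hL]; positivity
  calc (L + 1) * (2 * Real.sqrt (2 * B / (3 * ξ)))
      ≤ (9 * Real.sqrt K * Real.sqrt m) *
          (2 * (Real.sqrt (c₀ + 4) * Real.sqrt K / Real.sqrt Mx)) := by
        apply mul_le_mul e1 (by linarith) (by positivity) (by positivity)
    _ = 18 * Real.sqrt (c₀ + 4) * (Real.sqrt K * Real.sqrt K) * Real.sqrt m / Real.sqrt Mx := by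
        ring
    _ = 18 * Real.sqrt (c₀ + 4) * K * Real.sqrt m / Real.sqrt Mx := by
        rw [Real.mul_self_sqrt hK0.le]

lemma incl_aux (c₀ ξ M₁ M₂ K m Mx A B R L : ℝ) (q n : ℤ) (x : ℝ)
    (hc₀ : 1 ≤ c₀) (hξ : 0 < ξ) (hM₁ : 1 ≤ M₁) (hM₂ : 1 ≤ M₂)
    (hK1 : 1 ≤ K) (hm1 : 1 ≤ m) (hMx1 : 1 ≤ Mx) (hmMx : m * Mx = M₁ * M₂) (hMxξ : Mx ≤ ξ)
    (hB : B = (c₀ + 4) * K) (hR : R = Real.sqrt K / Real.sqrt m)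
    (hL : L = 8 * Real.sqrt K * Real.sqrt m)
    (h3 : M₁ ≤ x) (h4 : x ≤ 2 * M₁) (h5 : M₂ ≤ ξ - x) (h6 : ξ - x ≤ 2 * M₂)
    (h7 : jb (A + 3 * ξ * x * (ξ - x) + (ξ * (n : ℝ) - x * (q : ℝ)) ^ 2 / (ξ * x * (ξ - x)))
        ≤ c₀ * K)
    (h9 : |(n : ℝ) / x - ((q : ℝ) - (n : ℝ)) / (ξ - x)| < K ^ ((1 : ℝ) / 2) / m ^ ((1 : ℝ) / 2)) :
    |A + 3 * ξ * x * (ξ - x)| ≤ B ∧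
      (n : ℝ) ∈ Set.Ioo (((q : ℝ) / (ξ - x) - R) * (x * (ξ - x) / ξ))
        ((((q : ℝ) / (ξ - x) - R) * (x * (ξ - x) / ξ)) + L) := by
  have hK0 : (0:ℝ) < K := by linarith
  have hm0 : (0:ℝ) < m := by linarith
  have hsK : 0 < Real.sqrt K := Real.sqrt_pos.mpr hK0
  have hsm : 0 < Real.sqrt m := Real.sqrt_pos.mpr hm0
  have hx0 : (0:ℝ) < x := by linarith
  have hx20 : (0:ℝ) < ξ - x := by linarith
  have hR0 : 0 ≤ R := by rw [hR]; positivity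
  obtain ⟨v, hv⟩ : ∃ v : ℝ, v = (n : ℝ) / x - ((q : ℝ) - (n : ℝ)) / (ξ - x) := ⟨_, rfl⟩
  rw [← hv] at h9
  have hRv : |v| < R := by
    rw [hR]
    rw [← Real.sqrt_eq_rpow, ← Real.sqrt_eq_rpow] at h9
    exact h9
  have hv2 : v ^ 2 < K / m := by
    have h9' : |v| < Real.sqrt (K / m) := by rw [Real.sqrt_div hK0.le, ← hR]; exact hRv
    have h2 : Real.sqrt (K / m) ^ 2 = K / m := Real.sq_sqrt (by positivity)
    have h3' : |v| ^ 2 < Real.sqrt (K / m) ^ 2 :=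
      pow_lt_pow_left₀ h9' (abs_nonneg v) two_ne_zero
    rw [sq_abs, h2] at h3'
    exact h3'
  have hxx2 : x * (ξ - x) ≤ 4 * (m * Mx) := by
    rw [hmMx]
    nlinarith [mul_le_mul h4 h6 hx20.le (by linarith : (0:ℝ) ≤ 2 * M₁)]
  have hxx2ξ : x * (ξ - x) / ξ ≤ 4 * m := by
    rw [div_le_iff₀ hξ]
    nlinarith [hxx2, mul_le_mul_of_nonneg_left hMxξ (by linarith : (0:ℝ) ≤ 4 * m)]
  have hveq : x * (ξ - x) * v = ξ * n - x * q := by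
    rw [hv]; field_simp; ring
  have htermeq : (ξ * (n:ℝ) - x * (q:ℝ)) ^ 2 / (ξ * x * (ξ - x)) = (x * (ξ - x) / ξ) * v ^ 2 := by
    rw [← hveq]
    field_simp
  have hterm_nonneg : 0 ≤ (ξ * (n:ℝ) - x * (q:ℝ)) ^ 2 / (ξ * x * (ξ - x)) :=
    div_nonneg (sq_nonneg _) (by positivity)
  have hterm_le : (ξ * (n:ℝ) - x * (q:ℝ)) ^ 2 / (ξ * x * (ξ - x)) ≤ 4 * K := by
    rw [htermeq]
    calc (x * (ξ - x) / ξ) * v ^ 2 ≤ (4 * m) * (K / m) :=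
          mul_le_mul hxx2ξ hv2.le (sq_nonneg _) (by linarith)
      _ = 4 * K := by field_simp [hm0.ne']
  have habs : |A + 3 * ξ * x * (ξ - x) + (ξ * (n:ℝ) - x * (q:ℝ)) ^ 2 / (ξ * x * (ξ - x))|
      ≤ c₀ * K := le_trans (abs_le_jb _) h7
  have hSx : |A + 3 * ξ * x * (ξ - x)| ≤ B := by
    rw [abs_le] at habs ⊢
    rw [hB]
    constructor
    · linarith [habs.1, hterm_le]
    · linarith [habs.2, hterm_nonneg]
  refine ⟨hSx, ?_, ?_⟩
  · have hn_eq : ((q:ℝ) / (ξ - x) + v) * (x * (ξ - x) / ξ) = n := by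
      rw [hv]; field_simp [hx0.ne', hx20.ne', hξ.ne']; ring
    have hvlt : -R < v := (abs_lt.mp hRv).1
    calc ((q:ℝ) / (ξ - x) - R) * (x * (ξ - x) / ξ)
        < ((q:ℝ) / (ξ - x) + v) * (x * (ξ - x) / ξ) :=
          mul_lt_mul_of_pos_right (by linarith) (by positivity)
      _ = n := hn_eq
  · have hn_eq : ((q:ℝ) / (ξ - x) + v) * (x * (ξ - x) / ξ) = n := by
      rw [hv]; field_simp [hx0.ne', hx20.ne', hξ.ne']; ring
    have hvlt : v < R := (abs_lt.mp hRv).2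
    have hRt : R * (x * (ξ - x) / ξ) ≤ 4 * Real.sqrt K * Real.sqrt m := by
      have h1 : R * (x * (ξ - x) / ξ) ≤ R * (4 * m) := mul_le_mul_of_nonneg_left hxx2ξ hR0
      have h2 : R * (4 * m) = 4 * Real.sqrt K * Real.sqrt m := by
        rw [hR]
        field_simp
        linear_combination (-1 : ℝ) * Real.mul_self_sqrt hm0.le
      linarith
    calc (n:ℝ) = ((q:ℝ) / (ξ - x) + v) * (x * (ξ - x) / ξ) := hn_eq.symm
      _ < ((q:ℝ) / (ξ - x) + R) * (x * (ξ - x) / ξ) :=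
          mul_lt_mul_of_pos_right (by linarith) (by positivity)
      _ = ((q:ℝ) / (ξ - x) - R) * (x * (ξ - x) / ξ) + 2 * (R * (x * (ξ - x) / ξ)) := by ring
      _ ≤ ((q:ℝ) / (ξ - x) - R) * (x * (ξ - x) / ξ) + L := by rw [hL]; linarith

set_option maxHeartbeats 1000000 in
/-- size estimate for the region `B^{2,1}` (first part of Lemma 2.5). -/
theorem measure_B21_le (c₀ : ℝ) (hc₀ : 1 ≤ c₀) :
    ∃ C : ℝ, 0 < C ∧
      ∀ (τ ξ : ℝ) (q : ℤ) (K₁ K₂ M₁ M₂ : ℝ) (I₁ I₂ : Set ℝ),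
        0 < ξ → 1 ≤ K₁ → 1 ≤ K₂ → 1 ≤ M₁ → 1 ≤ M₂ →
        I₁.OrdConnected → I₂.OrdConnected →
        ((volume : Measure ℝ).prod Measure.count)
            {p : ℝ × ℤ | p.1 ∈ I₁ ∧ ξ - p.1 ∈ I₂ ∧
              M₁ ≤ p.1 ∧ p.1 ≤ 2 * M₁ ∧ M₂ ≤ ξ - p.1 ∧ ξ - p.1 ≤ 2 * M₂ ∧
              jb (τ - ξ ^ 3 + (q : ℝ) ^ 2 / ξ + 3 * ξ * p.1 * (ξ - p.1) +
                  (ξ * (p.2 : ℝ) - p.1 * (q : ℝ)) ^ 2 /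
                    (ξ * p.1 * (ξ - p.1))) ≤ c₀ * max K₁ K₂ ∧
              1 ≤ |(p.2 : ℝ) / p.1 - ((q : ℝ) - (p.2 : ℝ)) / (ξ - p.1)| ∧
              |(p.2 : ℝ) / p.1 - ((q : ℝ) - (p.2 : ℝ)) / (ξ - p.1)| <
                (max K₁ K₂) ^ ((1 : ℝ) / 2) / (min M₁ M₂) ^ ((1 : ℝ) / 2)} ≤
          ENNReal.ofReal
            (C * (max K₁ K₂) * (min M₁ M₂) ^ ((1 : ℝ) / 2) /
              (max M₁ M₂) ^ ((1 : ℝ) / 2)) := by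
  refine ⟨18 * Real.sqrt (c₀ + 4), by positivity, ?_⟩
  intro τ ξ q K₁ K₂ M₁ M₂ I₁ I₂ hξ hK₁ hK₂ hM₁ hM₂ _ _
  set K := max K₁ K₂ with hKdef
  set m := min M₁ M₂ with hmdef
  set Mx := max M₁ M₂ with hMxdef
  have hK1 : (1:ℝ) ≤ K := le_trans hK₁ (le_max_left _ _)
  have hm1 : (1:ℝ) ≤ m := le_min hM₁ hM₂
  have hMx1 : (1:ℝ) ≤ Mx := le_trans hM₁ (le_max_left _ _)
  have hK0 : (0:ℝ) < K := by linarith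
  have hm0 : (0:ℝ) < m := by linarith
  have hMx0 : (0:ℝ) < Mx := by linarith
  have hmMx : m * Mx = M₁ * M₂ := min_mul_max M₁ M₂
  by_cases hξM : M₁ + M₂ ≤ ξ
  swap
  · refine le_trans (measure_mono (fun p hp => ?_))
      ((by simp) : ((volume : Measure ℝ).prod Measure.count) (∅ : Set (ℝ × ℤ)) ≤ _)
    exact absurd (by linarith [hp.2.2.1, hp.2.2.2.2.1] : M₁ + M₂ ≤ ξ) hξM
  have hMxξ : Mx ≤ ξ := le_trans (max_le (by linarith) (by linarith)) hξM
  set A := τ - ξ ^ 3 + (q:ℝ) ^ 2 / ξ with hA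
  set B := (c₀ + 4) * K with hB
  have hB0 : (0:ℝ) < B := by rw [hB]; nlinarith
  set R := Real.sqrt K / Real.sqrt m with hR
  set L := 8 * Real.sqrt K * Real.sqrt m with hLdef
  have hL0 : (0:ℝ) ≤ L := by rw [hLdef]; positivity
  set a : ℝ → ℝ := fun x => ((q:ℝ) / (ξ - x) - R) * (x * (ξ - x) / ξ) with hadef
  set S : Set ℝ := ({x : ℝ | M₁ ≤ x} ∩ {x | x ≤ 2 * M₁} ∩ {x | M₂ ≤ ξ - x} ∩
      {x | ξ - x ≤ 2 * M₂}) ∩ {x | |A + 3 * ξ * x * (ξ - x)| ≤ B} with hSdef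
  set E' : Set (ℝ × ℤ) :=
    {p : ℝ × ℤ | p.1 ∈ S ∧ (p.2 : ℝ) ∈ Set.Ioo (a p.1) (a p.1 + L)} with hE'def
  have hS_meas : MeasurableSet S := by
    refine MeasurableSet.inter ?_ ?_
    · refine MeasurableSet.inter (MeasurableSet.inter (MeasurableSet.inter ?_ ?_) ?_) ?_
      · exact measurableSet_le measurable_const measurable_id
      · exact measurableSet_le measurable_id measurable_const
      · exact measurableSet_le measurable_const (measurable_const.sub measurable_id)
      · exact measurableSet_le (measurable_const.sub measurable_id) measurable_const
    · refine measurableSet_le ?_ measurable_const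
      have : Continuous fun x : ℝ => |A + 3 * ξ * x * (ξ - x)| := by continuity
      exact this.measurable
  have haM : Measurable a := by
    apply Measurable.mul
    · exact (measurable_const.div (measurable_const.sub measurable_id)).sub measurable_const
    · exact (measurable_id.mul (measurable_const.sub measurable_id)).div measurable_const
  have hcast : Measurable fun p : ℝ × ℤ => ((p.2 : ℤ) : ℝ) :=
    measurable_from_top.comp measurable_snd
  have hE'_meas : MeasurableSet E' := by
    have h1 : MeasurableSet {p : ℝ × ℤ | p.1 ∈ S} := hS_meas.preimage measurable_fst
    have h2 : MeasurableSet {p : ℝ × ℤ | a p.1 < (p.2:ℝ)} :=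
      measurableSet_lt (haM.comp measurable_fst) hcast
    have h3 : MeasurableSet {p : ℝ × ℤ | (p.2:ℝ) < a p.1 + L} :=
      measurableSet_lt hcast ((haM.comp measurable_fst).add measurable_const)
    have heq : E' = {p : ℝ × ℤ | p.1 ∈ S} ∩
        ({p : ℝ × ℤ | a p.1 < (p.2:ℝ)} ∩ {p : ℝ × ℤ | (p.2:ℝ) < a p.1 + L}) := by
      ext p
      simp only [hE'def, Set.mem_setOf_eq, Set.mem_Ioo, Set.mem_inter_iff] <;> tauto
    rw [heq]
    exact h1.inter (h2.inter h3)
  refine le_trans (measure_mono (show _ ⊆ E' from fun p hp => ?_)) ?_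
  · obtain ⟨x, n⟩ := p
    obtain ⟨-, -, h3, h4, h5, h6, h7, h8, h9⟩ := hp
    obtain ⟨hSx, hIoo⟩ := incl_aux c₀ ξ M₁ M₂ K m Mx A B R L q n x hc₀ hξ hM₁ hM₂
      hK1 hm1 hMx1 hmMx hMxξ hB hR hLdef h3 h4 h5 h6 h7 h9
    exact ⟨⟨⟨⟨⟨h3, h4⟩, h5⟩, h6⟩, hSx⟩, hIoo⟩
  have hvolS : volume S ≤ ENNReal.ofReal (2 * Real.sqrt (2 * B / (3 * ξ))) :=
    le_trans (measure_mono (fun x hx => hx.2)) (volS_aux ξ A B hξ hB0)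
  calc ((volume : Measure ℝ).prod Measure.count) E'
      = ∫⁻ x, Measure.count (Prod.mk x ⁻¹' E') ∂volume := Measure.prod_apply hE'_meas
    _ ≤ ∫⁻ x, S.indicator (fun _ => ENNReal.ofReal (L + 1)) x ∂volume := by
        refine lintegral_mono fun x => ?_
        by_cases hxS : x ∈ S
        · rw [Set.indicator_of_mem hxS]
          refine le_trans (measure_mono (fun n hn => ?_)) (count_Ioo_le (a x) L hL0)
          exact hn.2
        · rw [Set.indicator_of_notMem hxS]
          have hempty : Prod.mk x ⁻¹' E' = (∅ : Set ℤ) := by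
            ext n
            simp only [Set.mem_preimage, hE'def, Set.mem_setOf_eq, Set.mem_empty_iff_false,
              iff_false, not_and]
            intro h1
            exact absurd h1 hxS
          rw [hempty]
          simp
    _ = ENNReal.ofReal (L + 1) * volume S := lintegral_indicator_const hS_meas _
    _ ≤ ENNReal.ofReal (L + 1) * ENNReal.ofReal (2 * Real.sqrt (2 * B / (3 * ξ))) :=
        mul_le_mul_right hvolS _
    _ = ENNReal.ofReal ((L + 1) * (2 * Real.sqrt (2 * B / (3 * ξ)))) :=
        (ENNReal.ofReal_mul (by linarith)).symm
    _ ≤ ENNReal.ofReal (18 * Real.sqrt (c₀ + 4) * K * Real.sqrt m / Real.sqrt Mx) :=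
        ENNReal.ofReal_le_ofReal
          (final_aux c₀ K m Mx ξ B L hc₀ hK1 hm1 hMx1 hξ hMxξ hB hLdef)
    _ = ENNReal.ofReal (18 * Real.sqrt (c₀ + 4) * K * m ^ ((1:ℝ)/2) / Mx ^ ((1:ℝ)/2)) := by
        rw [← Real.sqrt_eq_rpow, ← Real.sqrt_eq_rpow]
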